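/- Assume n ≥ 1 and let D : A → A be a k-linear map satisfying the graded Leibniz rule with D(x_i) = x_1 * x_i for all i ∈ Fin n. Then for every m ≥ 1, the image under D of the set of polynomials homogeneous of degree 2m−1 equals the set { x_1 * g | g ∈ A homogeneous of degree 2m−1 }. -/

import Mathlib

open MvPolynomial

/-- For the DG polynomial algebra `A(1,0,…,0)` and every `m ≥ 1`, the image
under `D` of the homogeneous polynomials of degree `2m - 1` is exactly the set of
polynomials of the form `X 0 * g` with `g` homogeneous of degree `2m - 1`. -/
theorem stmt_7 (k : Type*) [Field k] [CharZero k] (n : ℕ) (hn : 1 ≤ n)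
    (D : MvPolynomial (Fin n) k →ₗ[k] MvPolynomial (Fin n) k)
    (hLeib : ∀ (d : ℕ) (a b : MvPolynomial (Fin n) k), a.IsHomogeneous d →
      D (a * b) = D a * b + ((-1 : k) ^ d) • (a * D b))
    (hD : ∀ i : Fin n, D (X i) = X ⟨0, hn⟩ * X i) :
    ∀ m : ℕ, 1 ≤ m →
      D '' {f : MvPolynomial (Fin n) k | f.IsHomogeneous (2 * m - 1)} =
        {p : MvPolynomial (Fin n) k |
          ∃ g : MvPolynomial (Fin n) k, g.IsHomogeneous (2 * m - 1) ∧ p = X ⟨0, hn⟩ * g} := by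
  have hD1 : D 1 = 0 := by
    have h := hLeib 0 1 1 (isHomogeneous_one _ _)
    simp only [mul_one, one_mul, pow_zero, one_smul] at h
    have := left_eq_add.mp h
    simpa using this
  -- D on monomials
  have key : ∀ d : ℕ, ∀ s : Fin n →₀ ℕ, ∀ c : k, (Finsupp.weight 1) s = d →
      D (monomial s c) = if d % 2 = 1 then X ⟨0, hn⟩ * monomial s c else 0 := by
    intro d
    induction d with
    | zero =>
      intro s c hs
      have hs0 : s = 0 := by
        exact (Finsupp.degree_eq_zero_iff s).mp (by rw [Finsupp.degree_eq_weight_one]; exact hs)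
      subst hs0
      have : (monomial (0 : Fin n →₀ ℕ) c : MvPolynomial (Fin n) k) = c • 1 := by
        simp [monomial_zero', MvPolynomial.smul_eq_C_mul]
      rw [this, map_smul, hD1, smul_zero]
      simp
    | succ d ih =>
      intro s c hs
      have hs0 : s ≠ 0 := by
        intro h
        subst h
        simp at hs
      obtain ⟨i, hi⟩ : ∃ i, s i ≠ 0 := by
        by_contra h
        push_neg at h
        exact hs0 (Finsupp.ext fun i => h i)
      have hst : s = Finsupp.single i 1 + (s - Finsupp.single i 1) := by
        ext j
        by_cases hj : j = i
        · subst hj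
          simp [Finsupp.single_apply]
          omega
        · simp [Finsupp.single_apply, Ne.symm hj, hj]
      set t := s - Finsupp.single i 1 with ht
      have hts : (Finsupp.weight 1) t = d := by
        have h2 : (Finsupp.weight (1 : Fin n → ℕ)) s = 1 + (Finsupp.weight 1) t := by
          conv_lhs => rw [hst]
          rw [map_add]
          congr 1
          simp [Finsupp.weight_apply, Finsupp.sum_single_index]
        rw [hs] at h2
        omega
      have hmul : (monomial s c : MvPolynomial (Fin n) k) = X i * monomial t c := by
        rw [hst, monomial_single_add, pow_one]
      rw [hmul, hLeib 1 (X i) (monomial t c) (isHomogeneous_X _ _), hD i,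
        ih t c hts, pow_one]
      rcases Nat.mod_two_eq_zero_or_one d with hd | hd
      · rw [if_neg (by omega), if_pos (by omega)]
        simp only [mul_zero, smul_zero, add_zero]
        ring
      · rw [if_pos hd, if_neg (by omega)]
        have : ((-1 : k)) • (X i * (X ⟨0, hn⟩ * monomial t c)) =
            -(X i * (X ⟨0, hn⟩ * monomial t c)) := by
          simp [neg_smul]
        rw [this]
        ring
  -- D on odd-degree homogeneous polynomials
  have hhom : ∀ d : ℕ, d % 2 = 1 → ∀ f : MvPolynomial (Fin n) k, f.IsHomogeneous d →
      D f = X ⟨0, hn⟩ * f := by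
    intro d hd f hf
    conv_lhs => rw [← f.support_sum_monomial_coeff]
    rw [map_sum]
    conv_rhs => rw [← f.support_sum_monomial_coeff, Finset.mul_sum]
    refine Finset.sum_congr rfl fun s hs => ?_
    rw [key d s _ (hf (mem_support_iff.mp hs)), if_pos hd]
  intro m hm
  have hodd : (2 * m - 1) % 2 = 1 := by omega
  ext p
  constructor
  · rintro ⟨f, hf, rfl⟩
    exact ⟨f, hf, hhom _ hodd f hf⟩
  · rintro ⟨g, hg, rfl⟩
    exact ⟨g, hg, hhom _ hodd g hg⟩
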